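/- Let V be a multi vector space over a finite-dimensional vector space X, with counts on X \ {0} taking values n₀ > n₁ > ... > n_k. If a basis B of X is multi linearly independent in V (i.e., an M-basis), then for every i, B ∩ V_{n_i} is a basis of the subspace V_{n_i} = {x : C_V(x) ≥ n_i}. -/

import Mathlib

/-- if a basis `b` of `X` is an M-basis for `V`, then `B ∩ V_{n_i}` is a
basis of the level subspace `V i` for every `i`. -/
theorem mvs_Mbasis_meets_levels_in_basis
    {K X ι : Type*} [Field K] [AddCommGroup X] [Module K X] [FiniteDimensional K X]
    (C : X → ℕ)
    (hadd : ∀ x y : X, min (C x) (C y) ≤ C (x + y))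
    (hsmul : ∀ (a : K) (x : X), C x ≤ C (a • x))
    (k : ℕ) (n : Fin (k + 1) → ℕ) (hanti : StrictAnti n)
    (hvals : ∀ x : X, x ≠ 0 → ∃ i, C x = n i)
    (hattained : ∀ i, ∃ x : X, x ≠ 0 ∧ C x = n i)
    (V : Fin (k + 1) → Submodule K X)
    (hV : ∀ i, (V i : Set X) = {x : X | n i ≤ C x})
    (b : Module.Basis ι K X)
    (hM : ∀ (s : Finset ι) (hs : s.Nonempty) (a : ι → K), (∀ i ∈ s, a i ≠ 0) →
      C (∑ i ∈ s, a i • b i) = s.inf' hs (fun i => C (b i))) :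
    ∀ i, LinearIndependent K
        (fun x : ↥(Set.range ⇑b ∩ (V i : Set X)) => (x : X)) ∧
      Submodule.span K (Set.range ⇑b ∩ (V i : Set X)) = V i := by
  intro i
  constructor
  · exact (((linearIndepOn_id_range_iff b.injective).mpr b.linearIndependent).mono Set.inter_subset_left).linearIndependent
  · apply le_antisymm
    · rw [Submodule.span_le]
      exact Set.inter_subset_right
    · intro x hx
      by_cases hx0 : x = 0
      · simp [hx0]
      · have hs : ((b.repr x).support).Nonempty := by
          rw [Finsupp.support_nonempty_iff]
          intro h
          exact hx0 (by simpa using congrArg b.repr.symm h)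
        have hxsum : x = ∑ j ∈ (b.repr x).support, b.repr x j • b j := by
          conv_lhs => rw [← b.linearCombination_repr x]
          rw [Finsupp.linearCombination_apply, Finsupp.sum]
        have hC : C x = ((b.repr x).support).inf' hs (fun j => C (b j)) := by
          have h := hM _ hs (fun j => b.repr x j) (fun j hj => Finsupp.mem_support_iff.mp hj)
          rw [← hxsum] at h
          exact h
        have hnx : n i ≤ C x := by
          have h : x ∈ ({y | n i ≤ C y} : Set X) := (hV i) ▸ (hx : x ∈ (V i : Set X))
          exact h
        rw [hxsum]
        refine Submodule.sum_mem _ (fun j hj => Submodule.smul_mem _ _ ?_)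
        apply Submodule.subset_span
        refine ⟨⟨j, rfl⟩, ?_⟩
        rw [hV i]
        exact le_trans hnx (hC ▸ Finset.inf'_le _ hj)
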